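/- Let n₀, ..., n_s ∈ ℕ and suppose there exist k ∈ ℕ, m₀, ..., m_s < F_k, and t₀, ..., t_s with v(t_i, k + 2r) = 0 and n_i = m_i + t_i for each i, where r is the smallest integer with s + 1 < F_r. Then for all ℓ: δ_ℓ(n₀ + ... + n_s) = δ_ℓ(m₀ + ... + m_s) + δ_ℓ(t₀ + ... + t_s). -/

import Mathlib

/-- A valid Zeckendorf representation of `n`: digits in `{0,1}`, digits below index 2 vanish,
no two consecutive ones, finite support, and the weighted sum equals `n`. -/
def IsZeckRep (n : ℕ) (δ : ℕ → ℕ) : Prop :=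
  (∀ k, δ k ≤ 1) ∧ (∀ k < 2, δ k = 0) ∧ (∀ k, δ (k + 1) = 1 → δ k = 0) ∧
    ∃ L, (∀ k, L < k → δ k = 0) ∧ n = ∑ k ∈ Finset.range (L + 1), δ k * Nat.fib k

-- The canonical Zeckendorf digit function.
open Classical in
noncomputable def zeckDigit (n k : ℕ) : ℕ :=
  if h : ∃ δ : ℕ → ℕ, IsZeckRep n δ then h.choose k else 0

noncomputable def phi : ℝ := (1 + Real.sqrt 5) / 2

-- sum extension
lemma zsum_ext {δ : ℕ → ℕ} {L U : ℕ} (h0 : ∀ j, L < j → δ j = 0) (hU : L + 1 ≤ U)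
    (f : ℕ → ℕ) :
    ∑ j ∈ Finset.range U, δ j * f j = ∑ j ∈ Finset.range (L + 1), δ j * f j := by
  refine (Finset.sum_subset (by intro x hx; simp only [Finset.mem_range] at *; omega) ?_).symm
  intro x _ hx
  simp only [Finset.mem_range, not_lt] at hx
  rw [h0 x (by omega), zero_mul]

lemma rep_digit_le {n : ℕ} {δ : ℕ → ℕ} (h : IsZeckRep n δ) {j : ℕ} (hj : δ j ≠ 0) :
    Nat.fib j ≤ n := by
  obtain ⟨h1, h2, h3, L, hL, hsum⟩ := h
  have hjL : j ≤ L := by by_contra hc; exact hj (hL j (by omega))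
  calc Nat.fib j = δ j * Nat.fib j := by
        have h9 := h1 j
        have h10 : δ j = 1 := by omega
        rw [h10, one_mul]
    _ ≤ _ := hsum ▸ Finset.single_le_sum (f := fun i => δ i * Nat.fib i)
        (fun i _ => Nat.zero_le _) (Finset.mem_range.2 (by omega))

-- Lemma G
lemma zsum_lt_fib {δ : ℕ → ℕ} (h1 : ∀ k, δ k ≤ 1) (h2 : ∀ k < 2, δ k = 0)
    (h3 : ∀ k, δ (k + 1) = 1 → δ k = 0) :
    ∀ B, ∑ j ∈ Finset.range (B + 1), δ j * Nat.fib j < Nat.fib (B + 1) := by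
  intro B
  induction B using Nat.strong_induction_on with
  | _ B ih =>
    match B, ih with
    | 0, _ => simp [h2 0 (by omega)]
    | 1, _ => simp [Finset.sum_range_succ, h2 0 (by omega), h2 1 (by omega)]
    | (B+2), ih =>
      rw [Finset.sum_range_succ]
      rcases Nat.lt_or_ge (δ (B+2)) 1 with hd | hd
      · have : δ (B+2) = 0 := by omega
        rw [this, zero_mul, add_zero]
        exact lt_of_lt_of_le (ih (B+1) (by omega)) (Nat.fib_le_fib_succ)
      · have hd1 : δ (B+2) = 1 := le_antisymm (h1 _) hd
        have hprev : δ (B+1) = 0 := h3 _ hd1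
        have : ∑ j ∈ Finset.range (B + 2), δ j * Nat.fib j
            = ∑ j ∈ Finset.range (B + 1), δ j * Nat.fib j := by
          rw [Finset.sum_range_succ, hprev, zero_mul, add_zero]
        rw [this, hd1, one_mul]
        have h4 := ih B (by omega)
        have h5 : Nat.fib (B + 2 + 1) = Nat.fib (B + 1) + Nat.fib (B + 2) := by
          rw [Nat.fib_add_two]
        omega
lemma rep_lt {n : ℕ} {δ : ℕ → ℕ} (h : IsZeckRep n δ) {B : ℕ} (hn : n < Nat.fib B)
    {j : ℕ} (hj : B ≤ j) : δ j = 0 := by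
  by_contra hc
  have h1 := rep_digit_le h hc
  have := Nat.fib_mono hj
  omega

lemma rep_zero {δ : ℕ → ℕ} (h : IsZeckRep 0 δ) : ∀ j, δ j = 0 := by
  intro j
  rcases Nat.lt_or_ge j 2 with hj | hj
  · exact h.2.1 j hj
  · exact rep_lt h (B := 2) (by simp) hj

lemma zeck_exists : ∀ n, ∃ δ, IsZeckRep n δ := by
  intro n
  induction n using Nat.strong_induction_on with
  | _ n ih =>
    rcases Nat.eq_zero_or_pos n with rfl | hn
    · exact ⟨fun _ => 0, fun _ => le_refl 0 |>.trans (by omega), fun _ _ => rfl,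
        fun _ h => by simp at h, 0, fun _ _ => rfl, by simp⟩
    · set g := Nat.greatestFib n with hg
      have hfg : Nat.fib g ≤ n := Nat.fib_greatestFib_le n
      have hfg1 : n < Nat.fib (g + 1) := Nat.lt_fib_greatestFib_add_one n
      have hg2 : 2 ≤ g := Nat.le_greatestFib.2 (by rw [Nat.fib_two]; omega)
      have hlt : n - Nat.fib g < n := by
        have : 0 < Nat.fib g := Nat.fib_pos.2 (by omega)
        omega
      obtain ⟨δ', hδ'⟩ := ih (n - Nat.fib g) hlt
      have hsmall : n - Nat.fib g < Nat.fib (g - 1) := by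
        have : Nat.fib (g + 1) = Nat.fib (g - 1) + Nat.fib g := by
          obtain ⟨g', hg'⟩ := Nat.exists_eq_add_of_le hg2
          rw [hg']
          rw [show 2 + g' + 1 = (g' + 1) + 2 by ring, Nat.fib_add_two (n := g' + 1)]
          congr 1
          · congr 1; omega
          · congr 1; omega
        omega
      have hhigh : ∀ j, g - 1 ≤ j → δ' j = 0 := fun j hj => rep_lt hδ' hsmall hj
      obtain ⟨h1, h2, h3, L, hL, hsum⟩ := hδ'
      refine ⟨fun j => if j = g then 1 else δ' j, fun j => ?_, fun j hj => ?_, fun j hj => ?_,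
        max L g, fun j hj => ?_, ?_⟩
      · by_cases hj : j = g <;> simp [hj, h1 j]
      · have : j ≠ g := by omega
        simp [this, h2 j hj]
      · simp only at hj
        by_cases hjg : j + 1 = g
        · have : j = g - 1 := by omega
          have hj0 : δ' j = 0 := hhigh j (by omega)
          have : j ≠ g := by omega
          simp [this, hj0]
        · rw [if_neg hjg] at hj
          by_cases hjg' : j = g
          · exfalso
            have := rep_digit_le ⟨h1, h2, h3, L, hL, hsum⟩ (j := j + 1) (by omega)
            rw [hjg'] at this
            have : Nat.fib (g - 1) ≤ Nat.fib (g + 1) := Nat.fib_mono (by omega)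
            have h5 := Nat.fib_mono (show g - 1 ≤ g + 1 by omega)
            have := hhigh (j + 1) (by omega)
            omega
          · simp [hjg', h3 j hj]
      · have h6 : j ≠ g := by omega
        simp [h6, hL j (by omega)]
      · have hδg : δ' g = 0 := hhigh g (by omega)
        have hsplit : ∀ j, (if j = g then 1 else δ' j) * Nat.fib j
            = δ' j * Nat.fib j + (if j = g then Nat.fib j else 0) := by
          intro j
          by_cases hj : j = g
          · subst hj; simp [hδg]
          · simp [hj]
        rw [Finset.sum_congr rfl (fun j _ => hsplit j), Finset.sum_add_distrib]
        rw [Finset.sum_ite_eq' (Finset.range (max L g + 1)) g (fun j => Nat.fib j)]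
        rw [if_pos (Finset.mem_range.2 (by omega))]
        rw [zsum_ext hL (by omega)]
        omega
open Classical in
/-- The top digit of a positive number's rep is `greatestFib`. -/
lemma rep_top {n : ℕ} {δ : ℕ → ℕ} (h : IsZeckRep n δ) (hn : 0 < n) :
    δ (Nat.greatestFib n) = 1 ∧ ∀ j, Nat.greatestFib n < j → δ j = 0 := by
  obtain ⟨h1, h2, h3, L, hL, hsum⟩ := h
  have hex : ∃ j, j ≤ L ∧ δ j = 1 := by
    by_contra hc
    push_neg at hc
    have : ∀ j ∈ Finset.range (L + 1), δ j * Nat.fib j = 0 := by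
      intro j hj
      simp only [Finset.mem_range] at hj
      have := h1 j
      have := hc j (by omega)
      have : δ j = 0 := by omega
      simp [this]
    rw [Finset.sum_eq_zero this] at hsum
    omega
  obtain ⟨j₁, hj₁L, hj₁⟩ := hex
  set g := Nat.findGreatest (fun j => δ j = 1) L with hgdef
  have hgspec : δ g = 1 := Nat.findGreatest_spec (P := fun j => δ j = 1) hj₁L hj₁
  have hgL : g ≤ L := Nat.findGreatest_le (P := fun j => δ j = 1) L
  have hghigh : ∀ j, g < j → δ j = 0 := by
    intro j hj
    rcases Nat.lt_or_ge L j with hLj | hLj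
    · exact hL j hLj
    · have := Nat.findGreatest_is_greatest (P := fun j => δ j = 1) hj hLj
      have := h1 j
      omega
  have hglow : Nat.fib g ≤ n := rep_digit_le ⟨h1, h2, h3, L, hL, hsum⟩ (by omega)
  have hgup : n < Nat.fib (g + 1) := by
    have : n = ∑ j ∈ Finset.range (g + 1), δ j * Nat.fib j := by
      rw [hsum, zsum_ext (L := g) hghigh (by omega)]
    rw [this]
    exact zsum_lt_fib h1 h2 h3 g
  have hge : g = Nat.greatestFib n := by
    have hg1 : g ≤ Nat.greatestFib n := Nat.le_greatestFib.2 hglow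
    have hg2 : Nat.greatestFib n < g + 1 := Nat.greatestFib_lt.2 hgup
    omega
  exact ⟨hge ▸ hgspec, fun j hj => hghigh j (hge ▸ hj)⟩

lemma zeck_unique : ∀ n, ∀ {δ δ' : ℕ → ℕ}, IsZeckRep n δ → IsZeckRep n δ' → ∀ j, δ j = δ' j := by
  intro n
  induction n using Nat.strong_induction_on with
  | _ n ih =>
    intro δ δ' h h' j
    rcases Nat.eq_zero_or_pos n with rfl | hn
    · rw [rep_zero h j, rep_zero h' j]
    · obtain ⟨htop, hhigh⟩ := rep_top h hn
      obtain ⟨htop', hhigh'⟩ := rep_top h' hn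
      set g := Nat.greatestFib n with hgdef
      have hg2 : 2 ≤ g := by
        by_contra hc
        have h5 := h.2.1 g (by omega)
        rw [htop] at h5
        omega
      have hfg : Nat.fib g ≤ n := Nat.fib_greatestFib_le n
      have hfpos : 0 < Nat.fib g := Nat.fib_pos.2 (by omega)
      -- removed-top reps
      have key : ∀ {ε : ℕ → ℕ}, IsZeckRep n ε → ε g = 1 → (∀ j, g < j → ε j = 0) →
          IsZeckRep (n - Nat.fib g) (Function.update ε g 0) := by
        intro ε hε hεg hεh
        obtain ⟨e1, e2, e3, L, hL, hsum⟩ := hε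
        refine ⟨fun j => ?_, fun j hj => ?_, fun j hj => ?_, g, fun j hj => ?_, ?_⟩
        · by_cases hj : j = g
          · subst hj; simp
          · rw [Function.update_of_ne hj]; exact e1 j
        · have : j ≠ g := by omega
          rw [Function.update_of_ne this]; exact e2 j hj
        · by_cases hj1 : j + 1 = g
          · rw [hj1, Function.update_self] at hj; omega
          · rw [Function.update_of_ne hj1] at hj
            by_cases hj0 : j = g
            · subst hj0; simp
            · rw [Function.update_of_ne hj0]; exact e3 j hj
        · by_cases hj0 : j = g
          · subst hj0; simp
          · rw [Function.update_of_ne hj0]; exact hεh j (by omega)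
        · have hs : n = ∑ j ∈ Finset.range (g + 1), ε j * Nat.fib j := by
            have hgL : g ≤ L := by
              by_contra hc
              have := hL g (by omega)
              omega
            rw [hsum, zsum_ext (L := g) hεh (by omega)]
          rw [Finset.sum_range_succ, hεg, one_mul] at hs
          have : ∑ j ∈ Finset.range (g + 1), Function.update ε g 0 j * Nat.fib j
              = ∑ j ∈ Finset.range g, ε j * Nat.fib j := by
            rw [Finset.sum_range_succ]
            simp only [Function.update_self, zero_mul, add_zero]
            refine Finset.sum_congr rfl (fun j hj => ?_)
            simp only [Finset.mem_range] at hj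
            rw [Function.update_of_ne (by omega)]
          rw [this]
          omega
      have h₁ := key h htop hhigh
      have h₂ := key h' htop' hhigh'
      have hlt : n - Nat.fib g < n := by omega
      have := ih (n - Nat.fib g) hlt h₁ h₂
      by_cases hj : j = g
      · subst hj; rw [htop, htop']
      · have := this j
        rwa [Function.update_of_ne hj, Function.update_of_ne hj] at this
noncomputable def aphi : ℝ := phi - 1  -- = 1/phi = (√5-1)/2

lemma sqrt5_sq : Real.sqrt 5 ^ 2 = 5 := Real.sq_sqrt (by norm_num)

lemma sqrt5_lt : 2 < Real.sqrt 5 ∧ Real.sqrt 5 < 3 := by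
  have h := sqrt5_sq
  have h0 : 0 ≤ Real.sqrt 5 := Real.sqrt_nonneg 5
  constructor <;> nlinarith

lemma phi_sq : phi ^ 2 = phi + 1 := by
  have := sqrt5_sq
  simp only [phi]; nlinarith

lemma one_lt_phi : 1 < phi := by have := sqrt5_lt; simp only [phi]; nlinarith [this.1]

lemma phi_lt_two : phi < 2 := by have := sqrt5_lt; simp only [phi]; nlinarith [this.2]

lemma aphi_pos : 0 < aphi := by have := one_lt_phi; simp only [aphi]; linarith

lemma aphi_lt_one : aphi < 1 := by have := phi_lt_two; simp only [aphi]; linarith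

lemma aphi_add_sq : aphi + aphi ^ 2 = 1 := by
  have := phi_sq; simp only [aphi]; nlinarith

lemma aphi_mul_phi : aphi * phi = 1 := by
  have := phi_sq; simp only [aphi]; nlinarith

/-- `phi * fib j = fib (j+1) - ψ^j` with `ψ = -aphi = 1 - phi`. -/
lemma phi_mul_fib : ∀ j : ℕ, phi * (Nat.fib j : ℝ) = (Nat.fib (j + 1) : ℝ) - (-aphi) ^ j := by
  have key : ∀ j : ℕ, phi * (Nat.fib j : ℝ) = (Nat.fib (j + 1) : ℝ) - (-aphi) ^ j ∧
      phi * (Nat.fib (j+1) : ℝ) = (Nat.fib (j + 2) : ℝ) - (-aphi) ^ (j+1) := by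
    intro j
    induction j with
    | zero =>
      constructor
      · simp
      · have := phi_sq
        simp only [aphi]
        norm_num [Nat.fib_one, Nat.fib_two]
    | succ j ih =>
      refine ⟨ih.2, ?_⟩
      have h1 := ih.1
      have h2 := ih.2
      have hfib : (Nat.fib (j + 3) : ℝ) = (Nat.fib (j + 1) : ℝ) + (Nat.fib (j + 2) : ℝ) := by
        have := Nat.fib_add_two (n := j + 1)
        rw [this]; push_cast; ring
      have hfib2 : (Nat.fib (j + 2) : ℝ) = (Nat.fib j : ℝ) + (Nat.fib (j + 1) : ℝ) := by
        have := Nat.fib_add_two (n := j)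
        rw [this]; push_cast; ring
      have hpp : ((-aphi):ℝ) ^ (j + 2) = (-aphi) ^ j + (-aphi) ^ (j + 1) := by
        linear_combination ((-aphi:ℝ) ^ j) * aphi_add_sq
      rw [show j + 1 + 1 = j + 2 by ring, show j + 2 + 1 = j + 3 by ring]
      linear_combination phi * hfib2 + h1 + h2 + hpp - hfib
  exact fun j => (key j).1

lemma fib_le_phi_pow : ∀ n : ℕ, (Nat.fib (n + 1) : ℝ) ≤ phi ^ n := by
  have key : ∀ n : ℕ, (Nat.fib (n + 1) : ℝ) ≤ phi ^ n ∧ (Nat.fib (n + 2) : ℝ) ≤ phi ^ (n+1) := by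
    intro n
    induction n with
    | zero =>
      constructor
      · simp
      · simp [Nat.fib_two]; linarith [one_lt_phi]
    | succ n ih =>
      refine ⟨ih.2, ?_⟩
      have hfib : (Nat.fib (n + 3) : ℝ) = (Nat.fib (n + 1) : ℝ) + (Nat.fib (n + 2) : ℝ) := by
        have := Nat.fib_add_two (n := n + 1); rw [this]; push_cast; ring
      have hphi : phi ^ (n + 2) = phi ^ n * phi ^ 2 := by ring
      have := phi_sq
      calc (Nat.fib (n + 2 + 1) : ℝ) = (Nat.fib (n + 1) : ℝ) + (Nat.fib (n + 2) : ℝ) := by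
            rw [show n + 2 + 1 = n + 3 by ring]; exact hfib
        _ ≤ phi ^ n + phi ^ (n + 1) := add_le_add ih.1 ih.2
        _ = phi ^ n * (1 + phi) := by ring
        _ = phi ^ (n + 2) := by rw [hphi, phi_sq]; ring
  exact fun n => (key n).1

/-- Key bound: the tail sum of a 0/1 sequence against ψ^j, with sign normalization. -/
lemma psi_sum_bound (δ : ℕ → ℕ) (hδ : ∀ j, δ j ≤ 1) :
    ∀ d L, (-(aphi ^ L) ≤ (-1:ℝ) ^ L * ∑ j ∈ Finset.Ico L (L + d), (δ j : ℝ) * (-aphi) ^ j)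
      ∧ ((-1:ℝ) ^ L * ∑ j ∈ Finset.Ico L (L + d), (δ j : ℝ) * (-aphi) ^ j
          ≤ aphi ^ L + aphi ^ (L + 1)) := by
  intro d
  induction d with
  | zero =>
    intro L
    simp only [Nat.add_zero, Finset.Ico_self, Finset.sum_empty, mul_zero]
    have h1 : (0:ℝ) < aphi ^ L := pow_pos aphi_pos L
    have h2 : (0:ℝ) < aphi ^ (L + 1) := pow_pos aphi_pos (L+1)
    constructor <;> linarith
  | succ d ih =>
    intro L
    have hsplit : ∑ j ∈ Finset.Ico L (L + (d+1)), (δ j : ℝ) * (-aphi) ^ j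
        = (δ L : ℝ) * (-aphi) ^ L + ∑ j ∈ Finset.Ico (L+1) (L + 1 + d), (δ j : ℝ) * (-aphi) ^ j := by
      rw [Finset.sum_eq_sum_Ico_succ_bot (by omega)]
      congr 1
      apply Finset.sum_congr _ (fun _ _ => rfl)
      congr 1
      omega
    obtain ⟨ihl, ihu⟩ := ih (L + 1)
    have hsign : (-1:ℝ) ^ L * (-aphi) ^ L = aphi ^ L := by
      rw [← mul_pow]; norm_num
    have hstep : (-1:ℝ) ^ L * ∑ j ∈ Finset.Ico (L+1) (L + 1 + d), (δ j : ℝ) * (-aphi) ^ j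
        = -((-1:ℝ) ^ (L+1) * ∑ j ∈ Finset.Ico (L+1) (L + 1 + d), (δ j : ℝ) * (-aphi) ^ j) := by
      rw [pow_succ]; ring
    have hδL : (0:ℝ) ≤ (δ L : ℝ) ∧ (δ L : ℝ) ≤ 1 := by
      constructor
      · positivity
      · exact_mod_cast hδ L
    have haL : (0:ℝ) < aphi ^ L := pow_pos aphi_pos L
    have hclean : aphi ^ (L + 1) + aphi ^ (L + 1 + 1) = aphi ^ L := by
      linear_combination (aphi ^ L) * aphi_add_sq
    have e1 : (-1:ℝ) ^ L * ((δ L : ℝ) * (-aphi) ^ L) = (δ L : ℝ) * aphi ^ L := by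
      rw [← hsign]; ring
    constructor
    · rw [hsplit, mul_add, e1, hstep]
      have h9 := mul_nonneg hδL.1 haL.le
      linarith [ihu]
    · rw [hsplit, mul_add, e1, hstep]
      have h9 : (δ L : ℝ) * aphi ^ L ≤ aphi ^ L := by nlinarith [hδL.2, haL]
      linarith [ihl]

lemma neg_one_pow_abs (L : ℕ) (x : ℝ) : |(-1:ℝ) ^ L * x| = |x| := by
  rw [abs_mul, abs_pow, abs_neg, abs_one, one_pow, one_mul]

lemma psi_sum_abs (δ : ℕ → ℕ) (hδ : ∀ j, δ j ≤ 1) (L U : ℕ) :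
    |∑ j ∈ Finset.Ico L U, (δ j : ℝ) * (-aphi) ^ j| ≤ aphi ^ L + aphi ^ (L + 1) := by
  rcases Nat.lt_or_ge U L with hUL | hUL
  · rw [Finset.Ico_eq_empty (by omega)]
    simp only [Finset.sum_empty, abs_zero]
    have := pow_pos aphi_pos L
    have := pow_pos aphi_pos (L + 1)
    linarith
  · obtain ⟨hl, hu⟩ := psi_sum_bound δ hδ (U - L) L
    rw [show L + (U - L) = U from by omega] at hl hu
    rw [← neg_one_pow_abs L]
    have h0 : (0:ℝ) < aphi ^ (L+1) := pow_pos aphi_pos _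
    rw [abs_le]
    constructor <;> linarith

lemma psi_sum_lower (δ : ℕ → ℕ) (hδ : ∀ j, δ j ≤ 1) {j₀ U : ℕ} (h0 : δ j₀ = 1)
    (h1 : δ (j₀ + 1) = 0) (hU : j₀ < U) :
    aphi ^ (j₀ + 1) ≤ |∑ j ∈ Finset.Ico j₀ U, (δ j : ℝ) * (-aphi) ^ j| := by
  have hsplit : ∑ j ∈ Finset.Ico j₀ U, (δ j : ℝ) * (-aphi) ^ j
      = (-aphi) ^ j₀ + ∑ j ∈ Finset.Ico (j₀ + 2) U, (δ j : ℝ) * (-aphi) ^ j := by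
    rw [Finset.sum_eq_sum_Ico_succ_bot hU, h0]
    rcases Nat.lt_or_ge (j₀ + 1) U with hU1 | hU1
    · rw [Finset.sum_eq_sum_Ico_succ_bot hU1, h1]
      push_cast
      ring
    · rw [Finset.Ico_eq_empty (by omega), Finset.Ico_eq_empty (by omega)]
      simp
  obtain ⟨V, hV⟩ : ∃ V, V = max U (j₀ + 2) := ⟨_, rfl⟩
  have hVe : ∑ j ∈ Finset.Ico (j₀ + 2) U, (δ j : ℝ) * (-aphi) ^ j
      = ∑ j ∈ Finset.Ico (j₀ + 2) ((j₀ + 2) + (V - (j₀ + 2))), (δ j : ℝ) * (-aphi) ^ j := by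
    rcases Nat.lt_or_ge U (j₀ + 2) with hc | hc
    · have hVv : V = j₀ + 2 := by rw [hV]; exact max_eq_right (le_of_lt hc)
      rw [Finset.Ico_eq_empty (by omega : ¬(j₀ + 2) < U), hVv, Nat.sub_self, Nat.add_zero,
        Finset.Ico_self]
    · have hVv : V = U := by rw [hV]; exact max_eq_left hc
      have h9 : U = j₀ + 2 + (V - (j₀ + 2)) := by rw [hVv]; omega
      rw [← h9]
  have hlow := (psi_sum_bound δ hδ (V - (j₀ + 2)) (j₀ + 2)).1
  rw [← hVe] at hlow
  have hsign : (-1:ℝ) ^ j₀ * (-aphi) ^ j₀ = aphi ^ j₀ := by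
    rw [← mul_pow]; norm_num
  have hsign2 : ((-1:ℝ)) ^ (j₀ + 2) = (-1:ℝ) ^ j₀ := by
    rw [pow_add]; norm_num
  have hkey : aphi ^ (j₀ + 1) ≤ (-1:ℝ) ^ j₀ * ∑ j ∈ Finset.Ico j₀ U, (δ j : ℝ) * (-aphi) ^ j := by
    rw [hsplit, mul_add, hsign]
    rw [hsign2] at hlow
    have hclean : aphi ^ (j₀ + 1) + aphi ^ (j₀ + 2) = aphi ^ j₀ := by
      linear_combination (aphi ^ j₀) * aphi_add_sq
    linarith
  calc aphi ^ (j₀ + 1) ≤ (-1:ℝ) ^ j₀ * ∑ j ∈ Finset.Ico j₀ U, (δ j : ℝ) * (-aphi) ^ j := hkey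
    _ ≤ |(-1:ℝ) ^ j₀ * ∑ j ∈ Finset.Ico j₀ U, (δ j : ℝ) * (-aphi) ^ j| := le_abs_self _
    _ = _ := neg_one_pow_abs _ _

lemma rep_phi_eq {n : ℕ} {δ : ℕ → ℕ} (h : IsZeckRep n δ) {B : ℕ} (hB : ∀ j, j < B → δ j = 0) :
    ∃ (z U : ℕ), B ≤ U ∧ (∀ j, U ≤ j → δ j = 0) ∧
      (z : ℝ) - phi * n = ∑ j ∈ Finset.Ico B U, (δ j : ℝ) * (-aphi) ^ j := by
  obtain ⟨h1, h2, h3, L, hL, hsum⟩ := h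
  refine ⟨∑ j ∈ Finset.range (max (L + 1) B), δ j * Nat.fib (j + 1), max (L + 1) B,
    le_max_right _ _, fun j hj => hL j (by omega), ?_⟩
  have hn : n = ∑ j ∈ Finset.range (max (L + 1) B), δ j * Nat.fib j := by
    rw [hsum, zsum_ext hL (le_max_left _ _)]
  have hcast : phi * (n : ℝ) = ∑ j ∈ Finset.range (max (L + 1) B),
      (δ j : ℝ) * (phi * (Nat.fib j : ℝ)) := by
    rw [hn]
    push_cast
    rw [Finset.mul_sum]
    exact Finset.sum_congr rfl (fun j _ => by ring)
  rw [hcast]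
  have : ∀ j ∈ Finset.range (max (L + 1) B), (δ j : ℝ) * (phi * (Nat.fib j : ℝ))
      = (δ j : ℝ) * (Nat.fib (j + 1) : ℝ) - (δ j : ℝ) * (-aphi) ^ j := by
    intro j _
    rw [phi_mul_fib j]
    ring
  rw [Finset.sum_congr rfl this, Finset.sum_sub_distrib]
  have hz : ((∑ j ∈ Finset.range (max (L + 1) B), δ j * Nat.fib (j + 1) : ℕ) : ℝ)
      = ∑ j ∈ Finset.range (max (L + 1) B), (δ j : ℝ) * (Nat.fib (j + 1) : ℝ) := by
    push_cast; rfl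
  rw [hz]
  have hsp : ∑ j ∈ Finset.range (max (L + 1) B), (δ j : ℝ) * (-aphi) ^ j
      = ∑ j ∈ Finset.Ico B (max (L + 1) B), (δ j : ℝ) * (-aphi) ^ j := by
    rw [Finset.range_eq_Ico, ← Finset.sum_Ico_consecutive _ (Nat.zero_le B) (le_max_right _ _)]
    have : ∑ j ∈ Finset.Ico 0 B, (δ j : ℝ) * (-aphi) ^ j = 0 := by
      apply Finset.sum_eq_zero
      intro j hj
      simp only [Finset.mem_Ico] at hj
      rw [hB j hj.2]
      simp
    rw [this, zero_add]
  rw [hsp]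
  ring

lemma zeck_spec (n : ℕ) : IsZeckRep n (zeckDigit n) := by
  have he : (zeckDigit n) = (zeck_exists n).choose := by
    funext j
    unfold zeckDigit
    rw [dif_pos (zeck_exists n)]
  rw [he]
  exact (zeck_exists n).choose_spec

/-- If each `n i` splits as `m i + t i` where `m i < F k` and the Zeckendorf digits of
`t i` below index `k + 2r` vanish (with `r` the smallest integer with `s + 1 < F r`),
then the Zeckendorf digits of the sum split accordingly:
`δ ℓ (n₀ + ⋯ + n_s) = δ ℓ (m₀ + ⋯ + m_s) + δ ℓ (t₀ + ⋯ + t_s)` for all `ℓ`. -/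
theorem zeck_digit_sum_separated (s k r : ℕ) (n m t : Fin (s + 1) → ℕ)
    (hr₁ : s + 1 < Nat.fib r) (hr₂ : ∀ r' : ℕ, s + 1 < Nat.fib r' → r ≤ r')
    (hm : ∀ i, m i < Nat.fib k)
    (ht : ∀ i, ∑ j ∈ Finset.Ico 2 (k + 2 * r), zeckDigit (t i) j * Nat.fib j = 0)
    (hn : ∀ i, n i = m i + t i) :
    ∀ ℓ : ℕ, zeckDigit (∑ i, n i) ℓ = zeckDigit (∑ i, m i) ℓ + zeckDigit (∑ i, t i) ℓ := by
  intro ℓ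
  -- basic bounds on k and r
  have hk : 1 ≤ k := by
    rcases Nat.eq_zero_or_pos k with rfl | hk
    · simpa using hm 0
    · exact hk
  have hr3 : 3 ≤ r := by
    by_contra hc
    interval_cases r <;> simp_all
  have hfibr2 : 2 ≤ Nat.fib r := by omega
  -- abbreviations
  have hNMT : ∑ i, n i = (∑ i, m i) + (∑ i, t i) := by
    rw [← Finset.sum_add_distrib]
    exact Finset.sum_congr rfl (fun i _ => hn i)
  rw [hNMT]
  obtain ⟨M, hM⟩ : ∃ M, M = ∑ i, m i := ⟨_, rfl⟩
  obtain ⟨T, hT⟩ : ∃ T, T = ∑ i, t i := ⟨_, rfl⟩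
  rw [← hM, ← hT]
  -- digits of each t i vanish below k + 2r
  have hti : ∀ i, ∀ j, j < k + 2 * r → zeckDigit (t i) j = 0 := by
    intro i j hj
    rcases Nat.lt_or_ge j 2 with hj2 | hj2
    · exact (zeck_spec (t i)).2.1 j hj2
    · have h0 := Finset.sum_eq_zero_iff.mp (ht i) j (Finset.mem_Ico.mpr ⟨hj2, hj⟩)
      have hfp : 0 < Nat.fib j := Nat.fib_pos.mpr (by omega)
      rcases Nat.mul_eq_zero.mp h0 with h | h
      · exact h
      · omega
  -- closeness of each phi * t i to an integer
  have hclose : ∀ i, ∃ z : ℕ,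
      |phi * (t i : ℝ) - z| ≤ aphi ^ (k + 2 * r) + aphi ^ (k + 2 * r + 1) := by
    intro i
    obtain ⟨z, U, hBU, hU, heq⟩ := rep_phi_eq (zeck_spec (t i)) (hti i)
    refine ⟨z, ?_⟩
    rw [show phi * (t i : ℝ) - z = -((z : ℝ) - phi * (t i : ℝ)) from by ring, abs_neg, heq]
    exact psi_sum_abs _ (zeck_spec (t i)).1 _ _
  choose z hz using hclose
  obtain ⟨Z, hZ⟩ : ∃ Z, Z = ∑ i, z i := ⟨_, rfl⟩
  have hTZ : |phi * (T : ℝ) - Z| ≤ (s + 1 : ℝ) * (aphi ^ (k + 2 * r) + aphi ^ (k + 2 * r + 1)) := by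
    have he : phi * (T : ℝ) - Z = ∑ i, (phi * (t i : ℝ) - (z i : ℝ)) := by
      rw [hT, hZ]
      push_cast
      rw [Finset.mul_sum, ← Finset.sum_sub_distrib]
    rw [he]
    calc |∑ i, (phi * (t i : ℝ) - (z i : ℝ))| ≤ ∑ i, |phi * (t i : ℝ) - (z i : ℝ)| :=
          Finset.abs_sum_le_sum_abs _ _
      _ ≤ ∑ _i : Fin (s + 1), (aphi ^ (k + 2 * r) + aphi ^ (k + 2 * r + 1)) :=
          Finset.sum_le_sum (fun i _ => hz i)
      _ = (s + 1 : ℝ) * (aphi ^ (k + 2 * r) + aphi ^ (k + 2 * r + 1)) := by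
          rw [Finset.sum_const, Finset.card_univ, Fintype.card_fin, nsmul_eq_mul]
          push_cast
          ring
  -- the master numeric bound
  have hEbound : (s + 1 : ℝ) * (aphi ^ (k + 2 * r) + aphi ^ (k + 2 * r + 1)) < aphi ^ (k + r) := by
    obtain ⟨K', hK'⟩ : ∃ K', k + 2 * r = K' + 1 := ⟨k + 2 * r - 1, by omega⟩
    obtain ⟨r', hr'⟩ : ∃ r', r = r' + 1 := ⟨r - 1, by omega⟩
    have h1 : aphi ^ (k + 2 * r) + aphi ^ (k + 2 * r + 1) = aphi ^ K' := by
      rw [hK']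
      linear_combination (aphi ^ K') * aphi_add_sq
    have h2 : (s + 1 : ℝ) < phi ^ r' := by
      have hfr : (Nat.fib r : ℝ) ≤ phi ^ r' := by
        have := fib_le_phi_pow r'
        rwa [← hr'] at this
      have : (s + 1 : ℝ) < (Nat.fib r : ℝ) := by exact_mod_cast hr₁
      linarith
    have h3 : phi ^ r' * aphi ^ K' = aphi ^ (k + r) := by
      have hsplit : aphi ^ K' = aphi ^ r' * aphi ^ (k + r) := by
        rw [← pow_add]
        congr 1
        omega
      rw [hsplit, ← mul_assoc, ← mul_pow, mul_comm phi aphi, aphi_mul_phi, one_pow, one_mul]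
    have hap : (0:ℝ) < aphi ^ K' := pow_pos aphi_pos _
    calc (s + 1 : ℝ) * (aphi ^ (k + 2 * r) + aphi ^ (k + 2 * r + 1))
        = (s + 1 : ℝ) * aphi ^ K' := by rw [h1]
      _ < phi ^ r' * aphi ^ K' := mul_lt_mul_of_pos_right h2 hap
      _ = aphi ^ (k + r) := h3
  -- digits of T vanish below k + r
  have hTlow : ∀ j, j < k + r → zeckDigit T j = 0 := by
    by_contra hc
    push_neg at hc
    obtain ⟨jw, hjw, hjne⟩ := hc
    have hex : ∃ j, zeckDigit T j ≠ 0 := ⟨jw, hjne⟩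
    have hj₀ := Nat.find_spec hex
    have hmin : ∀ j, j < Nat.find hex → zeckDigit T j = 0 := by
      intro j hj
      have := Nat.find_min hex hj
      simpa using this
    obtain ⟨j₀, hj₀def⟩ : ∃ j₀, j₀ = Nat.find hex := ⟨_, rfl⟩
    rw [← hj₀def] at hj₀ hmin
    have hj₀w : j₀ ≤ jw := hj₀def ▸ Nat.find_min' hex hjne
    have hd1 : zeckDigit T j₀ = 1 := by
      have := (zeck_spec T).1 j₀
      omega
    have hd2 : zeckDigit T (j₀ + 1) = 0 := by
      have h9 := (zeck_spec T).2.2.1 j₀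
      rcases Nat.lt_or_ge (zeckDigit T (j₀ + 1)) 1 with h | h
      · omega
      · have h8 : zeckDigit T (j₀ + 1) = 1 := by
          have := (zeck_spec T).1 (j₀ + 1)
          omega
        have := h9 h8
        omega
    have hj₀2 : 2 ≤ j₀ := by
      by_contra h
      have := (zeck_spec T).2.1 j₀ (by omega)
      omega
    obtain ⟨z', U', hBU', hU', heq'⟩ := rep_phi_eq (zeck_spec T) hmin
    have hj₀U : j₀ < U' := by
      by_contra h
      have := hU' j₀ (by omega)
      omega
    have hlower := psi_sum_lower (zeckDigit T) (zeck_spec T).1 hd1 hd2 hj₀U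
    have hupper := psi_sum_abs (zeckDigit T) (zeck_spec T).1 j₀ U'
    rw [← heq'] at hlower hupper
    -- z' = Z
    have hz'Z : z' = Z := by
      have haj : aphi ^ j₀ + aphi ^ (j₀ + 1) ≤ aphi := by
        have e1 : aphi ^ (2:ℕ) + aphi ^ (3:ℕ) = aphi := by
          linear_combination aphi * aphi_add_sq
        have e2 : aphi ^ j₀ ≤ aphi ^ (2:ℕ) :=
          pow_le_pow_of_le_one aphi_pos.le aphi_lt_one.le hj₀2
        have e3 : aphi ^ (j₀ + 1) ≤ aphi ^ (3:ℕ) :=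
          pow_le_pow_of_le_one aphi_pos.le aphi_lt_one.le (by omega)
        linarith
      have hkr2 : aphi ^ (k + r) < aphi ^ (2:ℕ) := by
        apply pow_lt_pow_right_of_lt_one₀ aphi_pos aphi_lt_one
        omega
      have hsq : aphi + aphi ^ (2:ℕ) = 1 := aphi_add_sq
      have hdist : |(z' : ℝ) - (Z : ℝ)| < 1 := by
        have hsplit : (z' : ℝ) - Z = ((z' : ℝ) - phi * T) + (phi * T - Z) := by ring
        calc |(z' : ℝ) - (Z : ℝ)| ≤ |(z' : ℝ) - phi * T| + |phi * (T:ℝ) - Z| := by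
              rw [hsplit]; exact abs_add_le _ _
          _ ≤ (aphi ^ j₀ + aphi ^ (j₀ + 1)) + (s + 1 : ℝ) * (aphi ^ (k + 2 * r) + aphi ^ (k + 2 * r + 1)) :=
              add_le_add hupper hTZ
          _ < aphi + aphi ^ (k + r) := by
              have := hEbound; linarith
          _ < 1 := by linarith
      rw [abs_lt] at hdist
      have hlt1 : (z' : ℝ) < (Z : ℝ) + 1 := by linarith
      have hlt2 : (Z : ℝ) < (z' : ℝ) + 1 := by linarith
      have h8 : z' < Z + 1 := by exact_mod_cast hlt1
      have h9 : Z < z' + 1 := by exact_mod_cast hlt2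
      omega
    rw [hz'Z] at hlower
    -- final contradiction
    have hfin : |(Z : ℝ) - phi * T| ≤ (s + 1 : ℝ) * (aphi ^ (k + 2 * r) + aphi ^ (k + 2 * r + 1)) := by
      rw [show (Z : ℝ) - phi * T = -(phi * (T:ℝ) - Z) from by ring, abs_neg]
      exact hTZ
    have hmono : aphi ^ (k + r) ≤ aphi ^ (j₀ + 1) :=
      pow_le_pow_of_le_one aphi_pos.le aphi_lt_one.le (by omega)
    linarith
  -- M is small
  have hMlt : M < Nat.fib (k + r - 1) := by
    have h1 : M ≤ (s + 1) * (Nat.fib k - 1) := by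
      rw [hM]
      calc ∑ i, m i ≤ ∑ _i : Fin (s + 1), (Nat.fib k - 1) :=
            Finset.sum_le_sum (fun i _ => by have := hm i; omega)
        _ = (s + 1) * (Nat.fib k - 1) := by
            rw [Finset.sum_const, Finset.card_univ, Fintype.card_fin, smul_eq_mul]
    have hfk : 1 ≤ Nat.fib k := Nat.fib_pos.mpr (by omega)
    have h2 : (s + 1) * (Nat.fib k - 1) ≤ (Nat.fib r - 1) * (Nat.fib k - 1) :=
      Nat.mul_le_mul_right _ (by omega)
    have h3 : (Nat.fib r - 1) * (Nat.fib k - 1) < Nat.fib r * Nat.fib k := by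
      calc (Nat.fib r - 1) * (Nat.fib k - 1) ≤ (Nat.fib r - 1) * Nat.fib k :=
            Nat.mul_le_mul_left _ (by omega)
        _ < Nat.fib r * Nat.fib k := by
            apply (Nat.mul_lt_mul_right (by omega)).mpr
            omega
    have h4 : Nat.fib r * Nat.fib k ≤ Nat.fib (k + r - 1) := by
      have hadd := Nat.fib_add (k - 1) (r - 1)
      have he : k - 1 + (r - 1) + 1 = k + r - 1 := by omega
      rw [he] at hadd
      have he2 : k - 1 + 1 = k := by omega
      have he3 : r - 1 + 1 = r := by omega
      rw [he2, he3] at hadd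
      calc Nat.fib r * Nat.fib k = Nat.fib k * Nat.fib r := Nat.mul_comm _ _
        _ ≤ Nat.fib (k - 1) * Nat.fib (r - 1) + Nat.fib k * Nat.fib r := by omega
        _ = Nat.fib (k + r - 1) := hadd.symm
    omega
  have hMhigh : ∀ j, k + r - 1 ≤ j → zeckDigit M j = 0 :=
    fun j hj => rep_lt (zeck_spec M) hMlt hj
  -- assemble the combined representation
  have hrep : IsZeckRep (M + T) (fun j => zeckDigit M j + zeckDigit T j) := by
    obtain ⟨m1, m2, m3, LM, hLM, hsumM⟩ := zeck_spec M
    obtain ⟨t1, t2, t3, LT, hLT, hsumT⟩ := zeck_spec T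
    refine ⟨fun j => ?_, fun j hj => ?_, fun j hj => ?_, LM + LT, fun j hj => ?_, ?_⟩
    · show zeckDigit M j + zeckDigit T j ≤ 1
      rcases Nat.lt_or_ge j (k + r - 1) with hjc | hjc
      · have := hTlow j (by omega)
        have := m1 j
        omega
      · have := hMhigh j hjc
        have := t1 j
        omega
    · show zeckDigit M j + zeckDigit T j = 0
      rw [m2 j hj, t2 j hj]
    · have hj' : zeckDigit M (j + 1) + zeckDigit T (j + 1) = 1 := hj
      clear hj
      show zeckDigit M j + zeckDigit T j = 0
      rcases Nat.lt_or_ge j (k + r - 1) with hjc | hjc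
      · have ht0 : zeckDigit T (j + 1) = 0 := hTlow (j + 1) (by omega)
        have ht0' : zeckDigit T j = 0 := hTlow j (by omega)
        rw [ht0, Nat.add_zero] at hj'
        rw [m3 j hj', ht0']
      · have hm0 : zeckDigit M (j + 1) = 0 := hMhigh (j + 1) (by omega)
        have hm0' : zeckDigit M j = 0 := hMhigh j hjc
        rw [hm0, Nat.zero_add] at hj'
        rw [t3 j hj', hm0']
    · show zeckDigit M j + zeckDigit T j = 0
      rw [hLM j (by omega), hLT j (by omega)]
    · have hsplit : ∀ j, (zeckDigit M j + zeckDigit T j) * Nat.fib j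
          = zeckDigit M j * Nat.fib j + zeckDigit T j * Nat.fib j := fun j => Nat.add_mul _ _ _
      rw [Finset.sum_congr rfl (fun j _ => hsplit j), Finset.sum_add_distrib]
      rw [zsum_ext hLM (by omega), zsum_ext hLT (by omega)]
      omega
  have := zeck_unique (M + T) (zeck_spec (M + T)) hrep ℓ
  simpa using this
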